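/- Let N be a lattice with dual M and A := ℤ[N]⊗_ℤΛ^* M, with shifted grading |z^n⊗α| := deg α − 1 and k-brackets l_k(ζ_1,…,ζ_k) := ε(ζ_1,…,ζ_k)·l_1(ζ_1⋯ζ_k), where ε(ζ_1,…,ζ_k) := (−1)^{Σ_{i=1}^k (k−i)|ζ_i|}. Then each l_k is graded skew-symmetric with respect to the shifted grading: for every permutation σ ∈ S_k and all homogeneous ζ_1,…,ζ_k ∈ A, l_k(ζ_{σ(1)},…,ζ_{σ(k)}) = χ(σ; ζ_1,…,ζ_k)·l_k(ζ_1,…,ζ_k), where χ(σ; ζ_1,…,ζ_k) := sgn(σ)·∏(−1)^{|ζ_i||ζ_j|}, the product taken over all pairs i < j that appear in reversed order in the sequence (ζ_{σ(1)},…,ζ_{σ(k)}) (the graded signature, or Koszul sign). -/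

import Mathlib

set_option synthInstance.maxHeartbeats 1000000
set_option maxHeartbeats 1000000

open Module Finset

/-- Contraction `ι_n` on `Λ^* M`, `M := Hom(N, ℤ)`, by a lattice element `n ∈ N`. -/
noncomputable def ctr {N : Type} [AddCommGroup N] (n : N) :
    ExteriorAlgebra ℤ (Module.Dual ℤ N) →ₗ[ℤ] ExteriorAlgebra ℤ (Module.Dual ℤ N) :=
  CliffordAlgebra.contractLeft (Module.Dual.eval ℤ N n)

/-- The operator `l_1` on `A = ℤ[N] ⊗ Λ^* M`: `l_1(z^n ⊗ α) = z^n ⊗ ι_n(α)`. -/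
noncomputable def lOne {N : Type} [AddCommGroup N]
    (x : AddMonoidAlgebra (ExteriorAlgebra ℤ (Module.Dual ℤ N)) N) :
    AddMonoidAlgebra (ExteriorAlgebra ℤ (Module.Dual ℤ N)) N :=
  Finsupp.sum x.coeff fun n a => AddMonoidAlgebra.single n (ctr n a)

/-- The sign `ε(ζ_1,…,ζ_k) = (−1)^{Σᵢ (k−i)|ζᵢ|}` of a tuple of homogeneous elements with
(unshifted) degrees `d 0, …, d (k-1)` (so shifted degrees `|ζ| = d − 1`). -/
def epsSign (k : ℕ) (d : Fin k → ℕ) : ℤ :=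
  ((Int.negOnePow (∑ i : Fin k, ((k : ℤ) - 1 - (i : ℕ)) * ((d i : ℤ) - 1)) : ℤˣ) : ℤ)

/-- The graded signature (Koszul sign) `χ(σ; ζ_1,…,ζ_k)`: the product of `sgn σ` with a
factor `(−1)^{|ζᵢ||ζⱼ|}` for each pair `i < j` appearing in reversed order in
`(ζ_{σ(1)},…,ζ_{σ(k)})`, i.e. with `σ⁻¹ j < σ⁻¹ i`. -/
def chiSign (k : ℕ) (σ : Equiv.Perm (Fin k)) (d : Fin k → ℕ) : ℤ :=
  ((Equiv.Perm.sign σ : ℤˣ) : ℤ) *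
    ((Int.negOnePow (∑ p ∈ Finset.univ.filter
        (fun p : Fin k × Fin k => p.1 < p.2 ∧ σ.symm p.2 < σ.symm p.1),
      ((d p.1 : ℤ) - 1) * ((d p.2 : ℤ) - 1)) : ℤˣ) : ℤ)


set_option maxRecDepth 10000

open ExteriorAlgebra

variable {M : Type} [AddCommGroup M] [Module ℤ M]

private lemma iota_mul_iotaMulti (m : M) : ∀ (q : ℕ) (v : Fin q → M),
    ι ℤ m * ιMulti ℤ q v = ((-1 : ℤ)^q) • (ιMulti ℤ q v * ι ℤ m) := by
  intro q
  induction q with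
  | zero => intro v; simp [ιMulti_zero_apply]
  | succ q ih =>
    intro v
    rw [ιMulti_succ_apply]
    have h0 : ι ℤ m * ι ℤ (v 0) = -(ι ℤ (v 0) * ι ℤ m) :=
      eq_neg_of_add_eq_zero_left (ι_add_mul_swap (R := ℤ) m (v 0))
    calc ι ℤ m * (ι ℤ (v 0) * ιMulti ℤ q (Matrix.vecTail v))
        = (ι ℤ m * ι ℤ (v 0)) * ιMulti ℤ q (Matrix.vecTail v) := by rw [mul_assoc]
      _ = -(ι ℤ (v 0) * (ι ℤ m * ιMulti ℤ q (Matrix.vecTail v))) := by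
          rw [h0, neg_mul, mul_assoc]
      _ = -(ι ℤ (v 0) * (((-1:ℤ)^q) • (ιMulti ℤ q (Matrix.vecTail v) * ι ℤ m))) := by
          rw [ih (Matrix.vecTail v)]
      _ = ((-1:ℤ)^(q+1)) • (ι ℤ (v 0) * ιMulti ℤ q (Matrix.vecTail v) * ι ℤ m) := by
          rw [mul_smul_comm, pow_succ, ← neg_smul, mul_assoc]
          ring_nf

/-- `ι m` commutes with degree-`q` elements up to sign `(-1)^q`. -/
lemma iota_mul_homog (m : M) {q : ℕ} {y : ExteriorAlgebra ℤ M} (hy : y ∈ ⋀[ℤ]^q M) :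
    ι ℤ m * y = ((-1 : ℤ)^q) • (y * ι ℤ m) := by
  rw [← ιMulti_span_fixedDegree] at hy
  induction hy using Submodule.span_induction with
  | mem x hx => obtain ⟨v, rfl⟩ := hx; exact iota_mul_iotaMulti m q v
  | zero => simp
  | add x y hx hy ihx ihy => rw [mul_add, ihx, ihy, add_mul, smul_add]
  | smul a x hx ih => rw [mul_smul_comm, ih, smul_comm, smul_mul_assoc]

private lemma iotaMulti_mul_homog {q : ℕ} {y : ExteriorAlgebra ℤ M} (hy : y ∈ ⋀[ℤ]^q M) :
    ∀ (p : ℕ) (v : Fin p → M),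
    ιMulti ℤ p v * y = ((-1 : ℤ)^(p*q)) • (y * ιMulti ℤ p v) := by
  intro p
  induction p with
  | zero => intro v; simp [ιMulti_zero_apply]
  | succ p ih =>
    intro v
    rw [ιMulti_succ_apply, mul_assoc, ih (Matrix.vecTail v), mul_smul_comm,
      ← mul_assoc, iota_mul_homog (v 0) hy, smul_mul_assoc, smul_smul, ← pow_add]
    rw [mul_assoc, Nat.succ_mul]

/-- Graded commutativity in the exterior algebra. -/
lemma gradedComm {p q : ℕ} {x y : ExteriorAlgebra ℤ M} (hx : x ∈ ⋀[ℤ]^p M)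
    (hy : y ∈ ⋀[ℤ]^q M) :
    x * y = ((-1 : ℤ)^(p*q)) • (y * x) := by
  rw [← ιMulti_span_fixedDegree] at hx
  induction hx using Submodule.span_induction with
  | mem x hx => obtain ⟨v, rfl⟩ := hx; exact iotaMulti_mul_homog hy p v
  | zero => simp
  | add x₁ x₂ h₁ h₂ ih₁ ih₂ => rw [add_mul, ih₁, ih₂, mul_add, smul_add]
  | smul a x hx ih => rw [smul_mul_assoc, ih, smul_comm, mul_smul_comm]
set_option maxHeartbeats 1000000

private lemma swap_succ {k : ℕ} (a b x : Fin k) :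
    Equiv.swap a.succ b.succ x.succ = (Equiv.swap a b x).succ := by
  rcases eq_or_ne x a with rfl | hxa
  · simp [Equiv.swap_apply_left]
  rcases eq_or_ne x b with rfl | hxb
  · simp [Equiv.swap_apply_right]
  rw [Equiv.swap_apply_of_ne_of_ne hxa hxb,
    Equiv.swap_apply_of_ne_of_ne (fun h => hxa (Fin.succ_injective _ h))
      (fun h => hxb (Fin.succ_injective _ h))]

/-- Swapping two adjacent entries of a product, given a commutation rule for them. -/
private lemma prod_ofFn_swap_adj {A : Type} [Ring A] (c : ℤ) :
    ∀ (k : ℕ) (g : Fin k → A) (u v : Fin k), (u : ℕ) + 1 = (v : ℕ) →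
      g u * g v = c • (g v * g u) →
      (List.ofFn g).prod = c • (List.ofFn (g ∘ Equiv.swap u v)).prod := by
  intro k
  induction k with
  | zero => intro g u; exact u.elim0
  | succ k ih =>
    intro g u v huv hcom
    rcases eq_or_ne u 0 with rfl | hu0
    · -- u = 0, v = 1
      match k, g, v, huv, hcom with
      | 0, g, v, huv, hcom => exact absurd v.isLt (by omega)
      | (k+1), g, v, huv, hcom =>
        have hv1 : v = 1 := by
          apply Fin.ext; rw [← huv]; rfl
        subst hv1
        have h10 : (0 : Fin (k+1)).succ = (1 : Fin (k+2)) := by apply Fin.ext; simp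
        rw [List.ofFn_succ, List.ofFn_succ, List.prod_cons, List.prod_cons,
          List.ofFn_succ, List.ofFn_succ, List.prod_cons, List.prod_cons]
        have e0 : (g ∘ Equiv.swap 0 1) 0 = g 1 := by
          simp [Equiv.swap_apply_left]
        have e1 : (g ∘ Equiv.swap (0 : Fin (k+2)) 1) (Fin.succ 0) = g 0 := by
          simp only [Function.comp_apply, h10, Equiv.swap_apply_right]
        have e2 : (List.ofFn fun i : Fin k =>
              (g ∘ Equiv.swap (0 : Fin (k+2)) 1) i.succ.succ)
            = List.ofFn fun i : Fin k => g i.succ.succ := by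
          apply congrArg
          funext i
          have : Equiv.swap (0 : Fin (k+2)) 1 i.succ.succ = i.succ.succ := by
            apply Equiv.swap_apply_of_ne_of_ne
            · exact Fin.succ_ne_zero _
            · rw [← h10]; exact fun h => Fin.succ_ne_zero _ (Fin.succ_injective _ h)
          simp only [Function.comp_apply, this]
        rw [e0, e1, e2]
        rw [h10, ← mul_assoc, ← mul_assoc, hcom, smul_mul_assoc]
    · -- u ≠ 0
      have hv0 : v ≠ 0 := by
        intro h; rw [h] at huv; simp at huv
      set u' := u.pred hu0 with hu'
      set v' := v.pred hv0 with hv'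
      have hus : u = u'.succ := (Fin.succ_pred _ _).symm
      have hvs : v = v'.succ := (Fin.succ_pred _ _).symm
      have huv' : (u' : ℕ) + 1 = (v' : ℕ) := by
        have h1 : (u : ℕ) = (u' : ℕ) + 1 := by rw [hus]; simp
        have h2 : (v : ℕ) = (v' : ℕ) + 1 := by rw [hvs]; simp
        omega
      rw [List.ofFn_succ, List.ofFn_succ, List.prod_cons, List.prod_cons]
      have e0 : (g ∘ Equiv.swap u v) 0 = g 0 := by
        simp only [Function.comp_apply]
        rw [Equiv.swap_apply_of_ne_of_ne (Ne.symm hu0) (Ne.symm hv0)]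
      have e1 : (List.ofFn fun i : Fin k => (g ∘ Equiv.swap u v) i.succ)
          = List.ofFn ((fun i : Fin k => g i.succ) ∘ Equiv.swap u' v') := by
        apply congrArg
        funext i
        simp only [Function.comp_apply, hus, hvs, swap_succ]
      have hcom' : (fun i : Fin k => g i.succ) u' * (fun i : Fin k => g i.succ) v'
          = c • ((fun i : Fin k => g i.succ) v' * (fun i : Fin k => g i.succ) u') := by
        show g u'.succ * g v'.succ = c • (g v'.succ * g u'.succ)
        rw [← hus, ← hvs]; exact hcom
      rw [e0, e1, ih (fun i : Fin k => g i.succ) u' v' huv' hcom', mul_smul_comm]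
open Finset

/-- The set of inversions of `σ`, as pairs of values `(i,j)`, `i < j`,
appearing in reversed order. -/
def invP {k : ℕ} (σ : Equiv.Perm (Fin k)) : Finset (Fin k × Fin k) :=
  Finset.univ.filter (fun p : Fin k × Fin k => p.1 < p.2 ∧ σ.symm p.2 < σ.symm p.1)

lemma invP_one {k : ℕ} : invP (1 : Equiv.Perm (Fin k)) = ∅ := by
  apply Finset.eq_empty_iff_forall_notMem.mpr
  intro p hp
  simp only [invP, mem_filter, mem_univ, true_and] at hp
  have h2 : (1 : Equiv.Perm (Fin k)).symm = 1 := rfl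
  rw [h2] at hp
  exact absurd hp.2 (lt_asymm hp.1)

lemma eq_one_of_invP_empty {k : ℕ} {σ : Equiv.Perm (Fin k)} (h : invP σ = ∅) : σ = 1 := by
  have hmono : StrictMono (σ.symm : Fin k → Fin k) := by
    intro a b hab
    rcases lt_trichotomy (σ.symm a) (σ.symm b) with h' | h' | h'
    · exact h'
    · exact absurd (σ.symm.injective h') (ne_of_lt hab)
    · exfalso
      have : (a, b) ∈ invP σ := by
        simp only [invP, mem_filter, mem_univ, true_and]
        exact ⟨hab, h'⟩
      rw [h] at this
      exact notMem_empty _ this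
  have hmono' : StrictMono (σ : Fin k → Fin k) := by
    intro a b hab
    rcases lt_trichotomy (σ a) (σ b) with h' | h' | h'
    · exact h'
    · exact absurd (σ.injective h') (ne_of_lt hab)
    · have := hmono h'
      simp only [Equiv.symm_apply_apply] at this
      exact absurd hab (not_lt.mpr this.le)
  apply Equiv.ext
  intro x
  haveI : WellFoundedLT (Fin k) := inferInstance
  have h1 : x ≤ σ x := hmono'.le_apply
  have h2 : σ x ≤ σ.symm (σ x) := hmono.le_apply
  rw [Equiv.symm_apply_apply] at h2
  exact le_antisymm h2 h1

/-- If `σ` has an inversion, it has an adjacent descent. -/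
lemma exists_descent {k : ℕ} {σ : Equiv.Perm (Fin k)} (h : invP σ ≠ ∅) :
    ∃ u v : Fin k, (u : ℕ) + 1 = (v : ℕ) ∧ σ v < σ u := by
  by_contra hc
  push_neg at hc
  apply h
  apply Finset.eq_empty_iff_forall_notMem.mpr
  have hmono : StrictMono (σ : Fin k → Fin k) := by
    match k, σ, hc with
    | 0, σ, hc => intro a; exact a.elim0
    | (k+1), σ, hc =>
      rw [Fin.strictMono_iff_lt_succ]
      intro i
      have hle := hc i.castSucc i.succ (by simp)
      rcases lt_or_eq_of_le hle with h' | h'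
      · exact h'
      · exact absurd (σ.injective h') (by simp [Fin.ext_iff])
  intro p hp
  simp only [invP, mem_filter, mem_univ, true_and] at hp
  obtain ⟨h1, h2⟩ := hp
  have hmono2 : StrictMono (σ.symm : Fin k → Fin k) := by
    intro a b hab
    rcases lt_trichotomy (σ.symm a) (σ.symm b) with h' | h' | h'
    · exact h'
    · exact absurd (σ.symm.injective h') (ne_of_lt hab)
    · have := hmono h'
      simp only [Equiv.apply_symm_apply] at this
      exact absurd hab (not_lt.mpr this.le)
  exact absurd (hmono2 h1) (not_lt.mpr h2.le)

lemma swap_lt_iff {k : ℕ} {u v a b : Fin k} (huv : (u : ℕ) + 1 = (v : ℕ))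
    (h1 : ¬(a = u ∧ b = v)) (h2 : ¬(a = v ∧ b = u)) :
    Equiv.swap u v a < Equiv.swap u v b ↔ a < b := by
  rw [Fin.lt_def, Fin.lt_def]
  simp only [Equiv.swap_apply_def]
  split_ifs <;> simp only [Fin.ext_iff, Fin.lt_def, not_and] at * <;> omega

lemma invP_mul_swap {k : ℕ} {σ : Equiv.Perm (Fin k)} {u v : Fin k}
    (huv : (u : ℕ) + 1 = (v : ℕ)) (hd : σ v < σ u) :
    invP (σ * Equiv.swap u v) = (invP σ).erase (σ v, σ u) := by
  have hsymm : ∀ x, (σ * Equiv.swap u v).symm x = Equiv.swap u v (σ.symm x) := by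
    intro x
    simp [Equiv.Perm.mul_def, Equiv.symm_apply_eq]
  ext p
  simp only [invP, mem_erase, mem_filter, mem_univ, true_and, hsymm]
  by_cases hp12 : p.1 < p.2
  · simp only [hp12, true_and, and_true]
    set a := σ.symm p.1 with ha
    set b := σ.symm p.2 with hb
    have hpa : p.1 = σ a := by rw [ha, Equiv.apply_symm_apply]
    have hpb : p.2 = σ b := by rw [hb, Equiv.apply_symm_apply]
    by_cases hB : b = u ∧ a = v
    · -- p = (σ v, σ u)
      have hp1 : p.1 = σ v := by rw [hpa, hB.2]
      have hp2 : p.2 = σ u := by rw [hpb, hB.1]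
      constructor
      · intro hlt
        exfalso
        rw [hB.1, hB.2, Equiv.swap_apply_left, Equiv.swap_apply_right] at hlt
        have huvlt : u < v := Fin.lt_def.mpr (by omega)
        exact absurd hlt (not_lt.mpr huvlt.le)
      · intro ⟨hne, _⟩
        exact absurd (Prod.ext_iff.mpr ⟨hp1, hp2⟩) hne
    · by_cases hA : b = v ∧ a = u
      · -- p = (σ u, σ v) : impossible since p.1 < p.2 means σ u < σ v
        obtain ⟨hbv, hau⟩ := hA
        rw [hpa, hpb, hau, hbv] at hp12
        exact absurd hp12 (not_lt.mpr hd.le)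
      · rw [swap_lt_iff huv hB hA]
        constructor
        · intro hba
          refine ⟨?_, hba⟩
          intro hpe
          apply hB
          have h1 : p.1 = σ v := by rw [hpe]
          have h2 : p.2 = σ u := by rw [hpe]
          constructor
          · rw [hb, h2, Equiv.symm_apply_apply]
          · rw [ha, h1, Equiv.symm_apply_apply]
        · exact fun h => h.2
  · simp [hp12]

lemma mem_invP_of_descent {k : ℕ} {σ : Equiv.Perm (Fin k)} {u v : Fin k}
    (huv : (u : ℕ) + 1 = (v : ℕ)) (hd : σ v < σ u) : (σ v, σ u) ∈ invP σ := by
  simp only [invP, mem_filter, mem_univ, true_and]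
  refine ⟨hd, ?_⟩
  simp only [Equiv.symm_apply_apply]
  exact Fin.lt_def.mpr (by omega)

lemma adj_swap_induction {k : ℕ} (P : Equiv.Perm (Fin k) → Prop) (h1 : P 1)
    (step : ∀ (σ : Equiv.Perm (Fin k)) (u v : Fin k), (u : ℕ) + 1 = (v : ℕ) →
      σ v < σ u → P (σ * Equiv.swap u v) → P σ) : ∀ σ, P σ := by
  suffices h : ∀ (m : ℕ) (σ : Equiv.Perm (Fin k)), (invP σ).card = m → P σ from
    fun σ => h _ σ rfl
  intro m
  induction m using Nat.strong_induction_on with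
  | _ m ih =>
    intro σ hcard
    by_cases he : invP σ = ∅
    · exact (eq_one_of_invP_empty he) ▸ h1
    · obtain ⟨u, v, huv, hd⟩ := exists_descent he
      have hmem : (σ v, σ u) ∈ invP σ := mem_invP_of_descent huv hd
      have hcard' : (invP (σ * Equiv.swap u v)).card < m := by
        rw [invP_mul_swap huv hd, Finset.card_erase_of_mem hmem]
        have : 0 < (invP σ).card := Finset.card_pos.mpr ⟨_, hmem⟩
        omega
      exact step σ u v huv hd (ih _ hcard' _ rfl)

lemma sign_eq_invP_card {k : ℕ} (σ : Equiv.Perm (Fin k)) :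
    ((Equiv.Perm.sign σ : ℤˣ) : ℤ) = (-1 : ℤ) ^ (invP σ).card := by
  induction σ using adj_swap_induction with
  | h1 => simp [invP_one]
  | step σ u v huv hd ih =>
    have hne : u ≠ v := by
      intro h; rw [h] at huv; omega
    have hmem := mem_invP_of_descent huv hd
    rw [invP_mul_swap huv hd, Finset.card_erase_of_mem hmem] at ih
    have hmul : ((Equiv.Perm.sign (σ * Equiv.swap u v) : ℤˣ) : ℤ)
        = ((Equiv.Perm.sign σ : ℤˣ) : ℤ) * (-1) := by
      rw [map_mul, Equiv.Perm.sign_swap hne]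
      push_cast
      ring
    have hc : (invP σ).card = ((invP σ).card - 1) + 1 :=
      (Nat.succ_pred_eq_of_pos (Finset.card_pos.mpr ⟨_, hmem⟩)).symm
    rw [hc, pow_succ, ← ih, hmul]
    ring

lemma prod_ofFn_perm {M : Type} [AddCommGroup M] [Module ℤ M] {k : ℕ} (d : Fin k → ℕ)
    (α : Fin k → ExteriorAlgebra ℤ M) (hα : ∀ t, α t ∈ ⋀[ℤ]^(d t) M)
    (σ : Equiv.Perm (Fin k)) :
    (List.ofFn fun t => α (σ t)).prod
      = ((-1 : ℤ) ^ (∑ p ∈ invP σ, d p.1 * d p.2)) • (List.ofFn α).prod := by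
  induction σ using adj_swap_induction with
  | h1 => simp [invP_one]
  | step σ u v huv hd ih =>
    have hmem := mem_invP_of_descent huv hd
    have hcom : α (σ u) * α (σ v)
        = ((-1 : ℤ) ^ (d (σ u) * d (σ v))) • (α (σ v) * α (σ u)) :=
      gradedComm (hα (σ u)) (hα (σ v))
    have hswap := prod_ofFn_swap_adj ((-1 : ℤ) ^ (d (σ u) * d (σ v))) k
      (fun t => α (σ t)) u v huv hcom
    have hτ : ((fun t => α (σ t)) ∘ Equiv.swap u v)
        = fun t => α ((σ * Equiv.swap u v) t) := rfl
    rw [hτ, ih] at hswap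
    rw [hswap, smul_smul, ← pow_add]
    congr 1
    rw [invP_mul_swap huv hd, mul_comm, add_comm]
    exact congrArg (fun m => ((-1 : ℤ) ^ m)) (Finset.sum_erase_add (invP σ) (fun p => d p.1 * d p.2) hmem)

private lemma sum_fst_fiber {k : ℕ} (S : Finset (Fin k × Fin k)) (e : Fin k → ℤ)
    (g : Fin k × Fin k → Fin k) :
    ∑ p ∈ S, e (g p) = ∑ j : Fin k, (((S.filter (fun p => g p = j)).card : ℤ)) * e j := by
  rw [← Finset.sum_fiberwise_of_maps_to (fun p _ => Finset.mem_univ (g p)) (fun p => e (g p))]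
  apply Finset.sum_congr rfl
  intro j _
  rw [Finset.sum_congr rfl (fun p hp => by rw [(Finset.mem_filter.mp hp).2]),
    Finset.sum_const, nsmul_eq_mul]

/-- The count of inversions involving a fixed index `j`. -/
private lemma count_invP {k : ℕ} (σ : Equiv.Perm (Fin k)) (j : Fin k) :
    ((invP σ).filter (fun p => p.1 = j)).card + ((invP σ).filter (fun p => p.2 = j)).card
      + 2 * ((univ.filter (fun x : Fin k => σ.symm x < σ.symm j))
          ∩ (univ.filter (fun x : Fin k => x < j))).card
    = (σ.symm j : ℕ) + (j : ℕ) := by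
  set C : Finset (Fin k) := univ.filter (fun x : Fin k => σ.symm x < σ.symm j) with hC
  set B : Finset (Fin k) := univ.filter (fun x : Fin k => x < j) with hB
  have h1 : ((invP σ).filter (fun p => p.1 = j)).card = (C \ B).card := by
    apply Finset.card_nbij (fun p => p.2)
    · intro p hp
      simp only [Finset.mem_coe, invP, mem_filter, mem_univ, true_and] at hp
      obtain ⟨⟨hlt, hinv⟩, h1⟩ := hp
      subst h1
      simp only [Finset.mem_coe, mem_sdiff, hC, hB, mem_filter, mem_univ, true_and]
      exact ⟨hinv, not_lt.mpr hlt.le⟩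
    · intro p hp q hq hpq
      simp only [Finset.coe_filter, Set.mem_setOf_eq] at hp hq
      exact Prod.ext (hp.2.trans hq.2.symm) hpq
    · intro l hl
      simp only [Finset.coe_sdiff, Set.mem_diff, hC, hB, Finset.coe_filter,
        Set.mem_setOf_eq, mem_univ, true_and] at hl
      obtain ⟨hinv, hnlt⟩ := hl
      have hne : l ≠ j := fun h => absurd (h ▸ hinv) (lt_irrefl _)
      have hjl : j < l := lt_of_le_of_ne (not_lt.mp hnlt) (Ne.symm hne)
      refine ⟨(j, l), ?_, rfl⟩
      simp only [Finset.mem_coe, invP, mem_filter, mem_univ, true_and]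
      exact ⟨⟨hjl, hinv⟩, trivial⟩
  have h2 : ((invP σ).filter (fun p => p.2 = j)).card = (B \ C).card := by
    apply Finset.card_nbij (fun p => p.1)
    · intro p hp
      simp only [Finset.mem_coe, invP, mem_filter, mem_univ, true_and] at hp
      obtain ⟨⟨hlt, hinv⟩, h1⟩ := hp
      subst h1
      simp only [Finset.mem_coe, mem_sdiff, hC, hB, mem_filter, mem_univ, true_and]
      exact ⟨hlt, not_lt.mpr hinv.le⟩
    · intro p hp q hq hpq
      simp only [Finset.coe_filter, Set.mem_setOf_eq] at hp hq
      exact Prod.ext hpq (hp.2.trans hq.2.symm)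
    · intro i hi
      simp only [Finset.coe_sdiff, Set.mem_diff, hC, hB, Finset.coe_filter,
        Set.mem_setOf_eq, mem_univ, true_and] at hi
      obtain ⟨hlt, hninv⟩ := hi
      have hne : σ.symm j ≠ σ.symm i := fun h =>
        absurd (σ.symm.injective h ▸ hlt) (lt_irrefl _)
      have hji : σ.symm j < σ.symm i := lt_of_le_of_ne (not_lt.mp hninv) hne
      refine ⟨(i, j), ?_, rfl⟩
      simp only [Finset.mem_coe, invP, mem_filter, mem_univ, true_and]
      exact ⟨⟨hlt, hji⟩, trivial⟩
  have hCcard : C.card = (σ.symm j : ℕ) := by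
    have himg : C = (univ.filter (fun x : Fin k => x < σ.symm j)).image σ := by
      ext x
      simp only [hC, mem_filter, mem_univ, true_and, Finset.mem_image]
      constructor
      · intro hx
        exact ⟨σ.symm x, by simpa using hx, by simp⟩
      · rintro ⟨y, hy, rfl⟩
        simpa using hy
    rw [himg, Finset.card_image_of_injective _ σ.injective]
    have : univ.filter (fun x : Fin k => x < σ.symm j) = Finset.Iio (σ.symm j) := by
      ext x; simp
    rw [this, Fin.card_Iio]
  have hBcard : B.card = (j : ℕ) := by
    have : B = Finset.Iio j := by ext x; simp [hB]
    rw [this, Fin.card_Iio]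
  have hCB := Finset.card_sdiff_add_card_inter C B
  have hBC := Finset.card_sdiff_add_card_inter B C
  rw [Finset.inter_comm B C] at hBC
  omega

private lemma signD {k : ℕ} (σ : Equiv.Perm (Fin k)) (d : Fin k → ℕ) :
    epsSign k (fun t => d (σ t)) * (-1 : ℤ) ^ (∑ p ∈ invP σ, d p.1 * d p.2)
      = chiSign k σ d * epsSign k d := by
  have hfilter : Finset.univ.filter
      (fun p : Fin k × Fin k => p.1 < p.2 ∧ σ.symm p.2 < σ.symm p.1) = invP σ := rfl
  rw [epsSign, epsSign, chiSign, hfilter, sign_eq_invP_card]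
  rw [← Int.coe_negOnePow_natCast (invP σ).card, ← Int.coe_negOnePow_natCast
    (∑ p ∈ invP σ, d p.1 * d p.2)]
  rw [← Units.val_mul, ← Units.val_mul, ← Units.val_mul]
  congr 1
  rw [← Int.negOnePow_add, ← Int.negOnePow_add, ← Int.negOnePow_add]
  rw [Int.negOnePow_eq_iff]
  -- notation
  set e : Fin k → ℤ := fun i => (d i : ℤ) - 1 with he
  set A := ∑ i : Fin k, ((k : ℤ) - 1 - (i : ℕ)) * e (σ i) with hA0
  set E := ∑ i : Fin k, ((k : ℤ) - 1 - (i : ℕ)) * e i with hE0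
  set C := ∑ p ∈ invP σ, e p.1 * e p.2 with hC0
  have hA : A = ∑ j : Fin k, ((k : ℤ) - 1 - ((σ.symm j : Fin k) : ℕ)) * e j := by
    rw [← Equiv.sum_comp σ (fun j => ((k : ℤ) - 1 - ((σ.symm j : Fin k) : ℕ)) * e j), hA0]
    exact Finset.sum_congr rfl (fun i _ => by rw [Equiv.symm_apply_apply])
  have hB : ((∑ p ∈ invP σ, d p.1 * d p.2 : ℕ) : ℤ)
      = C + ((∑ p ∈ invP σ, (e p.1 + e p.2)) + ((invP σ).card : ℤ)) := by
    rw [Finset.card_eq_sum_ones (invP σ)]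
    push_cast
    rw [hC0, ← Finset.sum_add_distrib, ← Finset.sum_add_distrib]
    exact Finset.sum_congr rfl (fun p _ => by rw [he]; push_cast; ring)
  -- goal: Even (A + ↑(∑ nat) - (↑card + C + E))
  have key : A + ((∑ p ∈ invP σ, d p.1 * d p.2 : ℕ) : ℤ)
        - (((invP σ).card : ℤ) + C + E)
      = ∑ j : Fin k, ((((k : ℤ) - 1 - ((σ.symm j : Fin k) : ℕ))
          - ((k : ℤ) - 1 - (j : ℕ)))
          + ((((invP σ).filter (fun p => p.1 = j)).card : ℤ)
            + (((invP σ).filter (fun p => p.2 = j)).card : ℤ))) * e j := by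
    rw [hA, hB]
    have hsplit : ∑ p ∈ invP σ, (e p.1 + e p.2)
        = (∑ j : Fin k, (((invP σ).filter (fun p => p.1 = j)).card : ℤ) * e j)
          + ∑ j : Fin k, (((invP σ).filter (fun p => p.2 = j)).card : ℤ) * e j := by
      rw [Finset.sum_add_distrib, sum_fst_fiber (invP σ) e (fun p => p.1),
        sum_fst_fiber (invP σ) e (fun p => p.2)]
    rw [hsplit, hE0]
    have hre : (∑ j : Fin k, ((k : ℤ) - 1 - ((σ.symm j : Fin k) : ℕ)) * e j)
          + (C + ((((∑ j : Fin k, (((invP σ).filter (fun p => p.1 = j)).card : ℤ) * e j)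
            + ∑ j : Fin k, (((invP σ).filter (fun p => p.2 = j)).card : ℤ) * e j))
            + ((invP σ).card : ℤ)))
          - (((invP σ).card : ℤ) + C + ∑ i : Fin k, ((k : ℤ) - 1 - (i : ℕ)) * e i)
        = (((∑ j : Fin k, ((k : ℤ) - 1 - ((σ.symm j : Fin k) : ℕ)) * e j)
            - ∑ i : Fin k, ((k : ℤ) - 1 - (i : ℕ)) * e i)
          + ∑ j : Fin k, (((invP σ).filter (fun p => p.1 = j)).card : ℤ) * e j)
          + ∑ j : Fin k, (((invP σ).filter (fun p => p.2 = j)).card : ℤ) * e j := by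
      ring
    rw [hre, ← Finset.sum_sub_distrib, ← Finset.sum_add_distrib, ← Finset.sum_add_distrib]
    exact Finset.sum_congr rfl (fun j _ => by ring)
  rw [key]
  rw [even_iff_two_dvd]
  apply Finset.dvd_sum
  intro j _
  apply Dvd.dvd.mul_right
  have hcount := count_invP σ j
  have hcast : ((((invP σ).filter (fun p => p.1 = j)).card : ℤ)
        + (((invP σ).filter (fun p => p.2 = j)).card : ℤ))
        + 2 * (((univ.filter (fun x : Fin k => σ.symm x < σ.symm j))
          ∩ (univ.filter (fun x : Fin k => x < j))).card : ℤ)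
      = (((σ.symm j : Fin k) : ℕ) : ℤ) + ((j : ℕ) : ℤ) := by
    exact_mod_cast hcount
  omega


private lemma prod_ofFn_single {R : Type} [Ring R] {G : Type} [AddCommMonoid G] :
    ∀ (k : ℕ) (n : Fin k → G) (α : Fin k → R),
      (List.ofFn fun t => AddMonoidAlgebra.single (n t) (α t)).prod
        = AddMonoidAlgebra.single (∑ t, n t) (List.ofFn α).prod := by
  intro k
  induction k with
  | zero =>
    intro n α
    simp [AddMonoidAlgebra.one_def]
  | succ k ih =>
    intro n α
    rw [List.ofFn_succ, List.prod_cons, ih (fun i => n i.succ) (fun i => α i.succ),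
      AddMonoidAlgebra.single_mul_single, List.ofFn_succ, List.prod_cons,
      Fin.sum_univ_succ]

private lemma lOne_single {N : Type} [AddCommGroup N] (m : N)
    (a : ExteriorAlgebra ℤ (Module.Dual ℤ N)) :
    lOne (AddMonoidAlgebra.single m a) = AddMonoidAlgebra.single m (ctr m a) := by
  unfold lOne
  rw [AddMonoidAlgebra.coeff_single]
  exact Finsupp.sum_single_index (by rw [map_zero]; simp)

/-- **Graded skew-symmetry of the brackets `l_k`** (equation (GradedSkew)).
With `l_k(ζ_1,…,ζ_k) := ε(ζ_1,…,ζ_k) l_1(ζ_1⋯ζ_k)` on homogeneous elements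
`ζ_t = z^{n t} ⊗ α t` (`α t ∈ Λ^{d t} M`), for every permutation `σ`:
`l_k(ζ_{σ(1)},…,ζ_{σ(k)}) = χ(σ; ζ_1,…,ζ_k) l_k(ζ_1,…,ζ_k)`. -/
theorem lk_graded_skew (N : Type) [AddCommGroup N] [Module.Free ℤ N] [Module.Finite ℤ N]
    (k : ℕ) (σ : Equiv.Perm (Fin k))
    (n : Fin k → N) (d : Fin k → ℕ)
    (α : Fin k → ExteriorAlgebra ℤ (Module.Dual ℤ N))
    (hα : ∀ t, α t ∈ ⋀[ℤ]^(d t) (Module.Dual ℤ N)) :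
    epsSign k (fun t => d (σ t)) •
      lOne ((List.ofFn fun t =>
        AddMonoidAlgebra.single (n (σ t)) (α (σ t))).prod) =
    chiSign k σ d •
      (epsSign k d • lOne ((List.ofFn fun t =>
        AddMonoidAlgebra.single (n t) (α t)).prod)) := by
  have hprodσ := prod_ofFn_single k (fun t => n (σ t)) (fun t => α (σ t))
  have hprod := prod_ofFn_single k n α
  have hm : ∑ t, n (σ t) = ∑ t, n t := Equiv.sum_comp σ n
  have hK := prod_ofFn_perm d α hα σ
  rw [hprodσ, hprod, hm, hK]
  have hsmul : lOne (AddMonoidAlgebra.single (∑ t, n t)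
        (((-1 : ℤ) ^ (∑ p ∈ invP σ, d p.1 * d p.2)) • (List.ofFn α).prod))
      = ((-1 : ℤ) ^ (∑ p ∈ invP σ, d p.1 * d p.2)) •
        lOne (AddMonoidAlgebra.single (∑ t, n t) (List.ofFn α).prod) := by
    rw [lOne_single, lOne_single, map_smul, AddMonoidAlgebra.smul_single]
  rw [hsmul, lOne_single, smul_smul, smul_smul, signD σ d]
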